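/- Let A be an n×r real matrix (n > r) of full column rank. If A_◇ is an r×r submatrix of A with maximal |det|, then A_◇ is dominant, i.e., every entry of A·A_◇^{-1} has absolute value at most 1. -/

import Mathlib

open Matrix BigOperators Filter

set_option maxHeartbeats 1000000

noncomputable def sval {m n : ℕ} (A : Matrix (Fin m) (Fin n) ℝ) (k : Fin n) : ℝ :=
  Real.sqrt ((Matrix.isHermitian_iff_isSymm.mpr (by rw [Matrix.IsSymm, Matrix.transpose_mul, Matrix.transpose_transpose]) : (Aᵀ * A).IsHermitian).eigenvalues
    (Tuple.sort (Matrix.isHermitian_iff_isSymm.mpr (by rw [Matrix.IsSymm, Matrix.transpose_mul, Matrix.transpose_transpose]) : (Aᵀ * A).IsHermitian).eigenvalues (Fin.rev k)))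

noncomputable def chebNorm {m n : ℕ} (A : Matrix (Fin m) (Fin n) ℝ) : ℝ :=
  ⨆ i, ⨆ j, |A i j|

noncomputable def frobNorm {m n : ℕ} (A : Matrix (Fin m) (Fin n) ℝ) : ℝ :=
  Real.sqrt (∑ i, ∑ j, (A i j) ^ 2)

/-- There exists an injective row selection with nonzero determinant, when rank is full. -/
lemma exists_nonsing_submatrix {n r : ℕ} (A : Matrix (Fin n) (Fin r) ℝ)
    (hrank : A.rank = r) :
    ∃ I' : Fin r → Fin n, Function.Injective I' ∧ (A.submatrix I' id).det ≠ 0 := by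
  have hspan : Submodule.span ℝ (Set.range A) = ⊤ := by
    have h1 := A.rank_eq_finrank_span_row
    rw [hrank] at h1
    change r = Module.finrank ℝ (Submodule.span ℝ (Set.range A)) at h1
    apply Submodule.eq_top_of_finrank_eq
    rw [← h1, Module.finrank_pi]
    simp
  obtain ⟨s, hs_sub, hs_span, hs_li⟩ := exists_linearIndependent ℝ (Set.range A)
  rw [hspan] at hs_span
  let b : Module.Basis s ℝ (Fin r → ℝ) := Module.Basis.mk hs_li (by rw [Subtype.range_coe, hs_span])
  haveI : Fintype s := FiniteDimensional.fintypeBasisIndex b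
  have hcard : Fintype.card s = r := by
    have h2 := Module.finrank_eq_card_basis b
    rw [Module.finrank_pi] at h2
    simpa using h2.symm
  let e : Fin r ≃ s := (Fintype.equivFinOfCardEq hcard).symm
  have hmem : ∀ k : Fin r, ∃ j : Fin n, A j = ((e k : Fin r → ℝ)) := fun k => hs_sub (e k).2
  choose I' hI' using hmem
  refine ⟨I', ?_, ?_⟩
  · intro a b' hab
    have h1 : A (I' a) = A (I' b') := by rw [hab]
    rw [hI' a, hI' b'] at h1
    exact e.injective (Subtype.ext h1)
  · have hrows : (fun k : Fin r => (A.submatrix I' id) k)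
        = fun k => ((e k : Fin r → ℝ)) := by
      ext k j
      simp [Matrix.submatrix_apply, hI' k]
    have hli : LinearIndependent ℝ (fun k : Fin r => (A.submatrix I' id) k) := by
      rw [hrows]
      exact hs_li.comp e e.injective
    have := Matrix.linearIndependent_rows_iff_isUnit.mp hli
    exact ((Matrix.isUnit_iff_isUnit_det _).mp this).ne_zero

theorem stmt12 {n r : ℕ} (hr : r < n) (A : Matrix (Fin n) (Fin r) ℝ)
    (hrank : A.rank = r) (Imax : Fin r → Fin n) (hImax : Function.Injective Imax)
    (hmax : ∀ I' : Fin r → Fin n, Function.Injective I' →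
      |(A.submatrix I' id).det| ≤ |(A.submatrix Imax id).det|) :
    ∀ (i : Fin n) (p : Fin r), |(A * (A.submatrix Imax id)⁻¹) i p| ≤ 1 := by
  intro i p
  set B := A.submatrix Imax id with hB
  have hdetB : B.det ≠ 0 := by
    obtain ⟨I', hI'inj, hI'det⟩ := exists_nonsing_submatrix A hrank
    intro h0
    have := hmax I' hI'inj
    rw [h0, abs_zero] at this
    exact hI'det (abs_eq_zero.mp (le_antisymm this (abs_nonneg _)))
  have hU : IsUnit B.det := isUnit_iff_ne_zero.mpr hdetB
  -- key identity: entry times det B equals det of row-replaced matrix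
  have key : (A * B⁻¹) i p * B.det = (B.updateRow p (A i)).det := by
    rw [Matrix.mul_apply]
    have hBi : B⁻¹ = (B.det)⁻¹ • B.adjugate := by
      rw [Matrix.inv_def, Ring.inverse_eq_inv']
    rw [hBi]
    simp only [Matrix.smul_apply, smul_eq_mul]
    have : ∑ j, A i j * ((B.det)⁻¹ * B.adjugate j p)
        = (B.det)⁻¹ * ∑ j, A i j * B.adjugate j p := by
      rw [Finset.mul_sum]; congr 1; ext j; ring
    rw [this, mul_comm, ← mul_assoc, mul_inv_cancel₀ hdetB, one_mul]
    have hadj : ∀ j, A i j * B.adjugate j p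
        = Matrix.cramer Bᵀ (Pi.single j (A i j)) p := by
      intro j
      rw [Matrix.adjugate, Matrix.of_apply, ← smul_eq_mul, ← Pi.smul_apply,
        ← LinearMap.map_smul, ← Pi.single_smul', smul_eq_mul, mul_one]
    simp_rw [hadj]
    rw [← Finset.sum_apply, ← map_sum, Finset.univ_sum_single (A i),
      Matrix.cramer_transpose_apply]
  -- the updated matrix is a submatrix of A
  set I2 : Fin r → Fin n := Function.update Imax p i with hI2
  have hupd : B.updateRow p (A i) = A.submatrix I2 id := by
    ext q j
    by_cases hq : q = p
    · subst hq
      rw [Matrix.updateRow_self, Matrix.submatrix_apply]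
      simp [hI2]
    · rw [Matrix.updateRow_ne hq]
      simp only [hB, hI2, Matrix.submatrix_apply, id, Function.update_of_ne hq]
  have hdet_le : |(B.updateRow p (A i)).det| ≤ |B.det| := by
    by_cases hcase : ∃ q : Fin r, q ≠ p ∧ Imax q = i
    · obtain ⟨q, hqp, hqi⟩ := hcase
      have : (B.updateRow p (A i)).det = 0 := by
        apply Matrix.det_zero_of_row_eq hqp
        rw [Matrix.updateRow_ne hqp, Matrix.updateRow_self, hB]
        funext j
        simp [hqi]
      rw [this, abs_zero]
      exact abs_nonneg _
    · push_neg at hcase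
      have hinj : Function.Injective I2 := by
        intro a b hab
        by_cases ha : a = p <;> by_cases hb : b = p
        · rw [ha, hb]
        · exfalso
          rw [hI2] at hab
          rw [ha, Function.update_self, Function.update_of_ne hb] at hab
          exact (hcase b hb) hab.symm
        · exfalso
          rw [hI2] at hab
          rw [hb, Function.update_self, Function.update_of_ne ha] at hab
          exact (hcase a ha) hab
        · rw [hI2] at hab
          rw [Function.update_of_ne ha, Function.update_of_ne hb] at hab
          exact hImax hab
      rw [hupd]
      exact hmax I2 hinj
  have := abs_le_abs_of_nonneg (abs_nonneg _) hdet_le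
  calc |(A * B⁻¹) i p| = |(B.updateRow p (A i)).det| / |B.det| := by
        rw [← key, abs_mul, mul_div_assoc, div_self (abs_ne_zero.mpr hdetB), mul_one]
      _ ≤ 1 := by
        rw [div_le_one (abs_pos.mpr hdetB)]
        exact hdet_le
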